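/- (Corollary) Let y, z, u, w be unit quaternions, let f : x ↦ (z·conj y)·x·(conj y·z) and g : x ↦ (w·conj u)·x·(conj u·w) be simple rotations with pointwise invariant planes Π_f = {x ∈ ℍ : ⟪x,y⟫ = ⟪x,z⟫ = 0} and Π_g = {x ∈ ℍ : ⟪x,u⟫ = ⟪x,w⟫ = 0}. Then the composition g ∘ f : x ↦ ((w·conj u)·(z·conj y))·x·((conj y·z)·(conj u·w)) is a simple rotation, i.e. Re((w·conj u)·(z·conj y)) = Re((conj y·z)·(conj u·w)), if and only if Π_f ∩ Π_g ≠ {0}, i.e. there exists a nonzero quaternion x with ⟪x,y⟫ = ⟪x,z⟫ = ⟪x,u⟫ = ⟪x,w⟫ = 0. -/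

import Mathlib

open Quaternion
open scoped InnerProductSpace

/-- (Corollary) Let `y, z, u, w` be unit quaternions and let
`f : x ↦ (z conj y) x (conj y z)` and `g : x ↦ (w conj u) x (conj u w)` be simple
rotations with pointwise invariant planes `Π_f = {x : ⟪x,y⟫ = ⟪x,z⟫ = 0}` and
`Π_g = {x : ⟪x,u⟫ = ⟪x,w⟫ = 0}`. Then `g ∘ f` is a simple rotation, i.e.
`Re ((w conj u)(z conj y)) = Re ((conj y z)(conj u w))`, iff `Π_f ∩ Π_g ≠ {0}`. -/
theorem det4_aux (M : Matrix (Fin 4) (Fin 4) ℝ) :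
    M.det = M 0 0*(M 1 1*(M 2 2*M 3 3 - M 2 3*M 3 2) - M 1 2*(M 2 1*M 3 3 - M 2 3*M 3 1) + M 1 3*(M 2 1*M 3 2 - M 2 2*M 3 1))
      - M 0 1*(M 1 0*(M 2 2*M 3 3 - M 2 3*M 3 2) - M 1 2*(M 2 0*M 3 3 - M 2 3*M 3 0) + M 1 3*(M 2 0*M 3 2 - M 2 2*M 3 0))
      + M 0 2*(M 1 0*(M 2 1*M 3 3 - M 2 3*M 3 1) - M 1 1*(M 2 0*M 3 3 - M 2 3*M 3 0) + M 1 3*(M 2 0*M 3 1 - M 2 1*M 3 0))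
      - M 0 3*(M 1 0*(M 2 1*M 3 2 - M 2 2*M 3 1) - M 1 1*(M 2 0*M 3 2 - M 2 2*M 3 0) + M 1 2*(M 2 0*M 3 1 - M 2 1*M 3 0)) := by
  rw [Matrix.det_succ_row_zero, Fin.sum_univ_four]
  simp (config := { decide := true }) [Matrix.det_fin_three, Matrix.submatrix, Fin.succAbove,
    show (Fin.succ 2 : Fin 4) = 3 from rfl, show (Fin.castSucc 2 : Fin 4) = 2 from rfl]
  ring

theorem composition_simple_iff_planes_intersect (y z u w : ℍ[ℝ])
    (hy : ‖y‖ = 1) (hz : ‖z‖ = 1) (hu : ‖u‖ = 1) (hw : ‖w‖ = 1) :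
    ((w * star u) * (z * star y)).re = ((star y * z) * (star u * w)).re ↔
      ∃ x : ℍ[ℝ], x ≠ 0 ∧ ⟪x, y⟫_ℝ = 0 ∧ ⟪x, z⟫_ℝ = 0 ∧ ⟪x, u⟫_ℝ = 0 ∧ ⟪x, w⟫_ℝ = 0 := by
  set M : Matrix (Fin 4) (Fin 4) ℝ :=
    !![y.re, y.imI, y.imJ, y.imK;
       z.re, z.imI, z.imJ, z.imK;
       u.re, u.imI, u.imJ, u.imK;
       w.re, w.imI, w.imJ, w.imK] with hM
  have hid : ((w * star u) * (z * star y)).re - ((star y * z) * (star u * w)).re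
      = -2 * M.det := by
    rw [hM, det4_aux]
    simp [Quaternion.re_mul]
    ring
  have key : (((w * star u) * (z * star y)).re = ((star y * z) * (star u * w)).re) ↔ M.det = 0 := by
    constructor <;> intro h <;> linarith [hid]
  rw [key, ← Matrix.exists_mulVec_eq_zero_iff]
  constructor
  · rintro ⟨v, hv, hMv⟩
    refine ⟨(Quaternion.equivTuple ℝ).symm v, ?_, ?_, ?_, ?_, ?_⟩
    · intro h0
      rw [Quaternion.ext_iff] at h0
      apply hv
      ext i
      fin_cases i
      · simpa using h0.1
      · simpa using h0.2.1
      · simpa using h0.2.2.1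
      · simpa using h0.2.2.2
    · have := congrFun hMv 0
      simp [hM, Matrix.mulVec, dotProduct, Fin.sum_univ_four] at this
      rw [Quaternion.inner_def, Quaternion.re_mul]
      simp [Quaternion.inner_def, Quaternion.re_mul]
      linarith
    · have := congrFun hMv 1
      simp [hM, Matrix.mulVec, dotProduct, Fin.sum_univ_four] at this
      rw [Quaternion.inner_def, Quaternion.re_mul]
      simp [Quaternion.inner_def, Quaternion.re_mul]
      linarith
    · have := congrFun hMv 2
      simp [hM, Matrix.mulVec, dotProduct, Fin.sum_univ_four] at this
      rw [Quaternion.inner_def, Quaternion.re_mul]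
      simp [Quaternion.inner_def, Quaternion.re_mul]
      linarith
    · have := congrFun hMv 3
      simp [hM, Matrix.mulVec, dotProduct, Fin.sum_univ_four] at this
      rw [Quaternion.inner_def, Quaternion.re_mul]
      simp [Quaternion.inner_def, Quaternion.re_mul]
      linarith
  · rintro ⟨x, hx, h1, h2, h3, h4⟩
    refine ⟨![x.re, x.imI, x.imJ, x.imK], ?_, ?_⟩
    · intro hv
      apply hx
      ext <;> [exact congrFun hv 0; exact congrFun hv 1; exact congrFun hv 2; exact congrFun hv 3]
    · simp only [Quaternion.inner_def, Quaternion.re_mul, Quaternion.re_star, Quaternion.imI_star, Quaternion.imJ_star, Quaternion.imK_star] at h1 h2 h3 h4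
      funext i
      fin_cases i <;>
        simp [hM, Matrix.mulVec, dotProduct, Fin.sum_univ_four] <;>
        [linarith [h1]; linarith [h2]; linarith [h3]; linarith [h4]]
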